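/- Let d ∈ ℕ^I be nonzero and let θ, ω ∈ ℝ^I lie in the same facet of the hyperplane arrangement ℋ(d), i.e. sgn(f(d,e)(θ)) = sgn(f(d,e)(ω)) for every e ∈ S_d. Let M and N be objects of 𝒜 with φ(M) = φ(N) = d, both θ-semistable, and suppose M is S_θ-equivalent to N. Then M and N are ω-semistable and M is S_ω-equivalent to N. -/

import Mathlib

open CategoryTheory CategoryTheory.Limits

variable {𝒜 : Type*} [Category 𝒜] [Abelian 𝒜] {I : Type*} [Fintype I]

/-- The `θ`-degree of an object `M`: `deg_θ(M) = ∑ i, θ i * φ i M`. -/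
noncomputable def degTheta (φ : I → 𝒜 → ℤ) (θ : I → ℝ) (M : 𝒜) : ℝ :=
  ∑ i, θ i * (φ i M : ℝ)

/-- The rank of an object `M`: `rk(M) = ∑ i, φ i M`. -/
def rkPhi (φ : I → 𝒜 → ℤ) (M : 𝒜) : ℤ := ∑ i, φ i M

/-- The `θ`-slope of an object `M`: `μ_θ(M) = deg_θ(M) / rk(M)`. -/
noncomputable def muSlope (φ : I → 𝒜 → ℤ) (θ : I → ℝ) (M : 𝒜) : ℝ :=
  degTheta φ θ M / (rkPhi φ M : ℝ)

/-- The family `φ` is additive on short exact sequences. -/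
def IsAdditiveFamily (φ : I → 𝒜 → ℤ) : Prop :=
  ∀ i, ∀ S : ShortComplex 𝒜, S.ShortExact → φ i S.X₂ = φ i S.X₁ + φ i S.X₃

/-- The family `φ` is positive. -/
def IsPositiveFamily (φ : I → 𝒜 → ℤ) : Prop :=
  (∀ i, ∀ M : 𝒜, 0 ≤ φ i M) ∧ ∀ M : 𝒜, ¬ IsZero M → ∃ i, 0 < φ i M

/-- `M` is `θ`-semistable: it is nonzero and every nonzero proper subobject has
slope at most that of `M`. -/
noncomputable def Semistable (φ : I → 𝒜 → ℤ) (θ : I → ℝ) (M : 𝒜) : Prop :=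
  ¬ IsZero M ∧ ∀ N : Subobject M, N ≠ ⊥ → N ≠ ⊤ →
    muSlope φ θ ((N : 𝒜)) ≤ muSlope φ θ M

/-- `M` is `θ`-stable. -/
noncomputable def Stable (φ : I → 𝒜 → ℤ) (θ : I → ℝ) (M : 𝒜) : Prop :=
  ¬ IsZero M ∧ ∀ N : Subobject M, N ≠ ⊥ → N ≠ ⊤ →
    muSlope φ θ ((N : 𝒜)) < muSlope φ θ M


/-- The slope `μ_θ(d)` of a dimension vector `d ∈ ℕ^I`. -/
noncomputable def muSlopeVec (θ : I → ℝ) (d : I → ℕ) : ℝ :=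
  (∑ i, θ i * (d i : ℝ)) / (∑ i, (d i : ℝ))

/-- `M` has dimension vector `d`, i.e. `φ i M = d i` for all `i`. -/
def HasDimVec (φ : I → 𝒜 → ℤ) (M : 𝒜) (d : I → ℕ) : Prop :=
  ∀ i, φ i M = (d i : ℤ)

/-- `e ∈ S_d`: `e ∈ ℕ^I \ ℚd` and there exist an object `M` with `φ(M) = d` and a
subobject `N` of `M` with `φ(N) = e`. -/
def MemSd (φ : I → 𝒜 → ℤ) (d e : I → ℕ) : Prop :=
  (¬ ∃ q : ℚ, ∀ i, (e i : ℚ) = q * (d i : ℚ)) ∧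
  ∃ (M : 𝒜) (N : Subobject M), HasDimVec φ M d ∧ HasDimVec φ ((N : 𝒜)) e

/-- `θ` and `ω` lie in the same facet of the hyperplane arrangement `ℋ(d)`:
`sgn (f(d,e)(θ)) = sgn (f(d,e)(ω))` for every `e ∈ S_d`. -/
def SameFacet (φ : I → 𝒜 → ℤ) (d : I → ℕ) (θ ω : I → ℝ) : Prop :=
  ∀ e : I → ℕ, MemSd φ d e →
    Real.sign (muSlopeVec θ d - muSlopeVec θ e) =
      Real.sign (muSlopeVec ω d - muSlopeVec ω e)

/-- The quotient object `M_{i-1}/M_i` of a decreasing chain of subobjects. -/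
noncomputable def quotObj {M : 𝒜} {n : ℕ} (F : Fin (n + 1) → Subobject M)
    (hmono : ∀ i : Fin n, F i.succ ≤ F i.castSucc) (i : Fin n) : 𝒜 :=
  cokernel (Subobject.ofLE (F i.succ) (F i.castSucc) (hmono i))

/-- `(F i)` is a Jordan–Hölder filtration of `M` with respect to `θ`:
`n ≥ 1`, `F 0 = M`, `F n = 0`, each `F (i+1)` is a proper subobject of `F i`, each
successive quotient is `θ`-stable, and `μ_θ(F i) = μ_θ(M)` for `i = 0, …, n−1`. -/
noncomputable def IsJHFiltration (φ : I → 𝒜 → ℤ) (θ : I → ℝ) {M : 𝒜} {n : ℕ}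
    (F : Fin (n + 1) → Subobject M)
    (hmono : ∀ i : Fin n, F i.succ ≤ F i.castSucc) : Prop :=
  1 ≤ n ∧ F 0 = ⊤ ∧ F (Fin.last n) = ⊥ ∧
  (∀ i : Fin n, F i.succ ≠ F i.castSucc) ∧
  (∀ i : Fin n, Stable φ θ (quotObj F hmono i)) ∧
  (∀ i : Fin n, muSlope φ θ (((F i.castSucc) : 𝒜)) = muSlope φ θ M)

/-- `M` and `N` are `S_θ`-equivalent: they admit Jordan–Hölder filtrations with respect to
`θ` of the same length whose successive quotients are isomorphic up to a permutation. -/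
noncomputable def SEquiv (φ : I → 𝒜 → ℤ) (θ : I → ℝ) (M N : 𝒜) : Prop :=
  ∃ (n : ℕ) (F : Fin (n + 1) → Subobject M)
    (hF : ∀ i : Fin n, F i.succ ≤ F i.castSucc)
    (G : Fin (n + 1) → Subobject N)
    (hG : ∀ i : Fin n, G i.succ ≤ G i.castSucc)
    (π : Equiv.Perm (Fin n)),
    IsJHFiltration φ θ F hF ∧ IsJHFiltration φ θ G hG ∧
    ∀ i : Fin n, Nonempty (quotObj F hF i ≅ quotObj G hG (π i))


section AuxLemmas

variable {φ : I → 𝒜 → ℤ}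

omit [Fintype I] in
lemma phiZero (hadd : IsAdditiveFamily φ) {Z : 𝒜} (hz : IsZero Z) (i : I) : φ i Z = 0 := by
  have := hadd i (ShortComplex.mk (𝟙 Z) (𝟙 Z) (by rw [hz.eq_zero_of_src (𝟙 Z ≫ 𝟙 Z)]))
    { exact := ShortComplex.exact_of_isZero_X₂ _ hz,
      mono_f := by dsimp; infer_instance, epi_g := by dsimp; infer_instance }
  dsimp at this; omega

omit [Fintype I] in
lemma phiCokernel (hadd : IsAdditiveFamily φ) {X Y : 𝒜} (f : X ⟶ Y) [Mono f] (i : I) :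
    φ i Y = φ i X + φ i (cokernel f) :=
  hadd i (ShortComplex.mk f (cokernel.π f) (cokernel.condition f))
    { exact := ShortComplex.exact_of_g_is_cokernel _ (cokernelIsCokernel f),
      mono_f := by dsimp; infer_instance, epi_g := by dsimp; infer_instance }

omit [Fintype I] in
lemma phiKernel (hadd : IsAdditiveFamily φ) {X Y : 𝒜} (g : X ⟶ Y) [Epi g] (i : I) :
    φ i X = φ i (kernel g) + φ i Y :=
  hadd i (ShortComplex.mk (kernel.ι g) g (kernel.condition g))
    { exact := ShortComplex.exact_of_f_is_kernel _ (kernelIsKernel g),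
      mono_f := by dsimp; infer_instance, epi_g := by dsimp; infer_instance }

omit [Fintype I] in
lemma phiIso (hadd : IsAdditiveFamily φ) {X Y : 𝒜} (e : X ≅ Y) (i : I) :
    φ i X = φ i Y := by
  have h := phiCokernel hadd e.hom i
  rw [phiZero hadd ((isZero_zero 𝒜).of_iso (cokernel.ofEpi e.hom)) i] at h
  omega

lemma rkPos (hpos : IsPositiveFamily φ) {X : 𝒜} (hx : ¬ IsZero X) : 0 < rkPhi φ X := by
  obtain ⟨i, hi⟩ := hpos.2 X hx
  exact Finset.sum_pos' (fun j _ => hpos.1 j X) ⟨i, Finset.mem_univ i, hi⟩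

lemma notZeroOfRkPos (hadd : IsAdditiveFamily φ) {X : 𝒜} (h : 0 < rkPhi φ X) :
    ¬ IsZero X := fun hz => by
  simp [rkPhi, phiZero hadd hz] at h

omit [Fintype I] in
lemma neBotNonzero {M : 𝒜} {X : Subobject M} (h : X ≠ ⊥) : ¬ IsZero ((X : 𝒜)) := by
  intro hz
  have hb : Subobject.mk X.arrow = ⊥ :=
    Subobject.mk_eq_bot_iff_zero.mpr (hz.eq_zero_of_src _)
  rw [Subobject.mk_arrow] at hb
  exact h hb

omit [Fintype I] in
lemma botIsZero {M : 𝒜} : IsZero (((⊥ : Subobject M) : 𝒜)) :=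
  (isZero_zero 𝒜).of_iso Subobject.botCoeIsoZero

lemma degAdd (ζ : I → ℝ) {Y X Z : 𝒜} (h : ∀ k, φ k Y = φ k X + φ k Z) :
    degTheta φ ζ Y = degTheta φ ζ X + degTheta φ ζ Z := by
  unfold degTheta
  rw [← Finset.sum_add_distrib]
  refine Finset.sum_congr rfl fun i _ => ?_
  rw [h i]; push_cast; ring

lemma rkAdd {Y X Z : 𝒜} (h : ∀ k, φ k Y = φ k X + φ k Z) :
    rkPhi φ Y = rkPhi φ X + rkPhi φ Z := by
  unfold rkPhi
  rw [← Finset.sum_add_distrib]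
  exact Finset.sum_congr rfl fun i _ => h i

omit [Fintype I] in
lemma existsW (hadd : IsAdditiveFamily φ) {M : 𝒜} {X Y : Subobject M} (h : X ≤ Y)
    (P : Subobject (cokernel (Subobject.ofLE X Y h))) :
    ∃ W : Subobject M, ∀ i, φ i ((W : 𝒜)) = φ i ((X : 𝒜)) + φ i ((P : 𝒜)) := by
  haveI : Epi (cokernel.π (Subobject.ofLE X Y h) ≫ cokernel.π P.arrow) := epi_comp _ _
  refine ⟨Subobject.mk
    (kernel.ι (cokernel.π (Subobject.ofLE X Y h) ≫ cokernel.π P.arrow) ≫ Y.arrow),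
    fun i => ?_⟩
  have e1 : φ i ((Subobject.mk
      (kernel.ι (cokernel.π (Subobject.ofLE X Y h) ≫ cokernel.π P.arrow) ≫ Y.arrow) : 𝒜))
      = φ i (kernel (cokernel.π (Subobject.ofLE X Y h) ≫ cokernel.π P.arrow)) :=
    phiIso hadd (Subobject.underlyingIso _) i
  have e2 := phiKernel hadd (cokernel.π (Subobject.ofLE X Y h) ≫ cokernel.π P.arrow) i
  have e3 := phiCokernel hadd P.arrow i
  have e4 := phiCokernel hadd (Subobject.ofLE X Y h) i
  omega

lemma muSlopeDim {d : I → ℕ} {M : 𝒜} (hM : HasDimVec φ M d) (ζ : I → ℝ) :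
    muSlope φ ζ M = muSlopeVec ζ d := by
  have hnum : degTheta φ ζ M = ∑ i, ζ i * (d i : ℝ) :=
    Finset.sum_congr rfl fun i _ => by rw [hM i]; norm_num
  have hden : (rkPhi φ M : ℝ) = ∑ i, (d i : ℝ) := by
    rw [rkPhi]
    push_cast
    exact Finset.sum_congr rfl fun i _ => by rw [hM i]; norm_num
  rw [muSlope, hnum, hden, muSlopeVec]

lemma sumDPos {d : I → ℕ} (hd : d ≠ 0) : (0 : ℝ) < ∑ i, (d i : ℝ) := by
  have : ∃ i, d i ≠ 0 := by
    by_contra hc; push_neg at hc; exact hd (funext hc)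
  obtain ⟨i, hi⟩ := this
  refine Finset.sum_pos' (fun j _ => by positivity) ⟨i, Finset.mem_univ i, ?_⟩
  exact_mod_cast Nat.pos_of_ne_zero hi

lemma transport (hadd : IsAdditiveFamily φ) (hpos : IsPositiveFamily φ)
    {d : I → ℕ} (hd : d ≠ 0) {θ ω : I → ℝ} (hfacet : SameFacet φ d θ ω)
    {M₀ : 𝒜} (hM₀ : HasDimVec φ M₀ d) (X : Subobject M₀) (hx : ¬ IsZero ((X : 𝒜))) :
    (degTheta φ θ ((X : 𝒜)) ≤ muSlopeVec θ d * (rkPhi φ ((X : 𝒜)) : ℝ) →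
      degTheta φ ω ((X : 𝒜)) ≤ muSlopeVec ω d * (rkPhi φ ((X : 𝒜)) : ℝ)) ∧
    (degTheta φ θ ((X : 𝒜)) = muSlopeVec θ d * (rkPhi φ ((X : 𝒜)) : ℝ) →
      degTheta φ ω ((X : 𝒜)) = muSlopeVec ω d * (rkPhi φ ((X : 𝒜)) : ℝ)) ∧
    (degTheta φ θ ((X : 𝒜)) < muSlopeVec θ d * (rkPhi φ ((X : 𝒜)) : ℝ) →
      degTheta φ ω ((X : 𝒜)) < muSlopeVec ω d * (rkPhi φ ((X : 𝒜)) : ℝ)) := by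
  set x : 𝒜 := ((X : 𝒜)) with hxdef
  set e : I → ℕ := fun i => (φ i x).toNat with he
  have hei : ∀ i, φ i x = (e i : ℤ) := fun i => (Int.toNat_of_nonneg (hpos.1 i x)).symm
  have heR : ∀ i, ((φ i x : ℤ) : ℝ) = (e i : ℝ) := fun i => by rw [hei i]; norm_num
  have hrk : (rkPhi φ x : ℝ) = ∑ i, (e i : ℝ) := by
    rw [rkPhi]
    push_cast
    exact Finset.sum_congr rfl fun i _ => heR i
  have hrpos : (0 : ℝ) < (rkPhi φ x : ℝ) := by exact_mod_cast rkPos hpos hx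
  have hdeg : ∀ ζ : I → ℝ, degTheta φ ζ x = ∑ i, ζ i * (e i : ℝ) := fun ζ =>
    Finset.sum_congr rfl fun i _ => by rw [heR i]
  by_cases hq : ∃ q : ℚ, ∀ i, (e i : ℚ) = q * (d i : ℚ)
  · obtain ⟨q, hqe⟩ := hq
    have hqe' : ∀ i, (e i : ℝ) = (q : ℝ) * (d i : ℝ) := fun i => by exact_mod_cast hqe i
    have hSd : (0 : ℝ) < ∑ i, (d i : ℝ) := sumDPos hd
    have hkey : ∀ ζ : I → ℝ, degTheta φ ζ x = muSlopeVec ζ d * (rkPhi φ x : ℝ) := by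
      intro ζ
      have h1 : (rkPhi φ x : ℝ) = (q : ℝ) * ∑ i, (d i : ℝ) := by
        rw [hrk, Finset.mul_sum]
        exact Finset.sum_congr rfl fun i _ => hqe' i
      have h2 : degTheta φ ζ x = (q : ℝ) * ∑ i, ζ i * (d i : ℝ) := by
        rw [hdeg ζ, Finset.mul_sum]
        refine Finset.sum_congr rfl fun i _ => ?_
        rw [hqe' i]; ring
      rw [h1, h2, muSlopeVec]
      field_simp
    rw [hkey θ, hkey ω]
    exact ⟨fun _ => le_rfl, fun _ => rfl, fun h => absurd h (lt_irrefl _)⟩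
  · have hmem : MemSd φ d e := ⟨hq, M₀, X, hM₀, hei⟩
    have hsign := hfacet e hmem
    have hμe : ∀ ζ : I → ℝ, muSlopeVec ζ e = degTheta φ ζ x / (rkPhi φ x : ℝ) := by
      intro ζ
      rw [muSlopeVec, ← hrk, ← hdeg ζ]
    have hconv : ∀ ζ : I → ℝ,
        muSlopeVec ζ d * (rkPhi φ x : ℝ) - degTheta φ ζ x
          = (muSlopeVec ζ d - muSlopeVec ζ e) * (rkPhi φ x : ℝ) := by
      intro ζ
      rw [hμe ζ]
      field_simp
    set a := muSlopeVec θ d - muSlopeVec θ e with ha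
    set b := muSlopeVec ω d - muSlopeVec ω e with hb
    have t1 : 0 < a → 0 < b := by
      intro hpa
      rcases lt_trichotomy b 0 with hbb | hbb | hbb
      · rw [Real.sign_of_pos hpa, Real.sign_of_neg hbb] at hsign; norm_num at hsign
      · rw [Real.sign_of_pos hpa, hbb, Real.sign_zero] at hsign; norm_num at hsign
      · exact hbb
    have t2 : a = 0 → b = 0 := fun haz =>
      Real.sign_eq_zero_iff.mp (by rw [← hsign, haz, Real.sign_zero])
    refine ⟨?_, ?_, ?_⟩
    · intro h
      have h1 : 0 ≤ a * (rkPhi φ x : ℝ) := by rw [← hconv θ]; linarith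
      have h2 : 0 ≤ a := by nlinarith
      have h3 : 0 ≤ b := by
        rcases h2.eq_or_lt with hz | hp
        · rw [t2 hz.symm]
        · exact (t1 hp).le
      nlinarith [hconv ω]
    · intro h
      have h1 : a * (rkPhi φ x : ℝ) = 0 := by rw [← hconv θ]; linarith
      have h2 : a = 0 := by
        rcases mul_eq_zero.mp h1 with hz | hz
        · exact hz
        · exact absurd hz hrpos.ne'
      have h3 : b = 0 := t2 h2
      nlinarith [hconv ω]
    · intro h
      have h1 : 0 < a * (rkPhi φ x : ℝ) := by rw [← hconv θ]; linarith
      have h2 : 0 < a := by nlinarith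
      have h3 : 0 < b := t1 h2
      nlinarith [hconv ω]

lemma semistableTransport (hadd : IsAdditiveFamily φ) (hpos : IsPositiveFamily φ)
    {d : I → ℕ} (hd : d ≠ 0) {θ ω : I → ℝ} (hfacet : SameFacet φ d θ ω)
    {M : 𝒜} (hM : HasDimVec φ M d) (hMss : Semistable φ θ M) : Semistable φ ω M := by
  refine ⟨hMss.1, fun X hb ht => ?_⟩
  have hx := neBotNonzero hb
  have hrpos : (0 : ℝ) < (rkPhi φ ((X : 𝒜)) : ℝ) := by exact_mod_cast rkPos hpos hx
  have h1 := hMss.2 X hb ht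
  rw [muSlopeDim hM θ, muSlope, div_le_iff₀ hrpos] at h1
  have h3 := (transport hadd hpos hd hfacet hM X hx).1 h1
  rw [muSlopeDim hM ω, muSlope, div_le_iff₀ hrpos]
  exact h3

lemma jhTransport (hadd : IsAdditiveFamily φ) (hpos : IsPositiveFamily φ)
    {d : I → ℕ} (hd : d ≠ 0) {θ ω : I → ℝ} (hfacet : SameFacet φ d θ ω)
    {M : 𝒜} (hM : HasDimVec φ M d) {n : ℕ}
    {F : Fin (n + 1) → Subobject M} {hF : ∀ i : Fin n, F i.succ ≤ F i.castSucc}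
    (hJF : IsJHFiltration φ θ F hF) : IsJHFiltration φ ω F hF := by
  obtain ⟨hn, h0, hlast, hne, hstab, hslope⟩ := hJF
  have hkey : ∀ j : Fin (n + 1),
      degTheta φ θ ((F j : 𝒜)) = muSlopeVec θ d * (rkPhi φ ((F j : 𝒜)) : ℝ) ∧
      degTheta φ ω ((F j : 𝒜)) = muSlopeVec ω d * (rkPhi φ ((F j : 𝒜)) : ℝ) := by
    intro j
    by_cases hb : F j = ⊥
    · have hz : IsZero ((F j : 𝒜)) := hb ▸ botIsZero
      have hdz : ∀ ζ : I → ℝ, degTheta φ ζ ((F j : 𝒜)) = 0 := fun ζ => by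
        simp [degTheta, phiZero hadd hz]
      have hrz : rkPhi φ ((F j : 𝒜)) = 0 := by simp [rkPhi, phiZero hadd hz]
      constructor <;> rw [hdz, hrz] <;> norm_num
    · have hjne : j ≠ Fin.last n := fun h => hb (h ▸ hlast)
      obtain ⟨i, hji⟩ := Fin.exists_castSucc_eq.mpr hjne
      have hx : ¬ IsZero ((F j : 𝒜)) := neBotNonzero hb
      have hrpos : (0 : ℝ) < (rkPhi φ ((F j : 𝒜)) : ℝ) := by exact_mod_cast rkPos hpos hx
      have hθ : degTheta φ θ ((F j : 𝒜)) = muSlopeVec θ d * (rkPhi φ ((F j : 𝒜)) : ℝ) := by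
        have := hslope i
        rw [hji, muSlopeDim hM θ, muSlope, div_eq_iff hrpos.ne'] at this
        exact this
      exact ⟨hθ, (transport hadd hpos hd hfacet hM (F j) hx).2.1 hθ⟩
  have hphiQ : ∀ (i : Fin n) (k : I),
      φ k ((F i.castSucc : 𝒜)) = φ k ((F i.succ : 𝒜)) + φ k (quotObj F hF i) :=
    fun i k => phiCokernel hadd (Subobject.ofLE (F i.succ) (F i.castSucc) (hF i)) k
  have hrkQR : ∀ i : Fin n,
      (rkPhi φ ((F i.castSucc : 𝒜)) : ℝ)
        = (rkPhi φ ((F i.succ : 𝒜)) : ℝ) + (rkPhi φ (quotObj F hF i) : ℝ) := fun i => by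
    exact_mod_cast congrArg (fun z : ℤ => (z : ℝ)) (rkAdd (hphiQ i))
  have hrkQpos : ∀ i : Fin n, (0 : ℝ) < (rkPhi φ (quotObj F hF i) : ℝ) := fun i => by
    exact_mod_cast rkPos hpos (hstab i).1
  have hdegQ : ∀ (i : Fin n) (ζ : I → ℝ), degTheta φ ζ ((F i.castSucc : 𝒜))
      = degTheta φ ζ ((F i.succ : 𝒜)) + degTheta φ ζ (quotObj F hF i) :=
    fun i ζ => degAdd ζ (hphiQ i)
  have hQθ : ∀ i : Fin n,
      degTheta φ θ (quotObj F hF i) = muSlopeVec θ d * (rkPhi φ (quotObj F hF i) : ℝ) := by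
    intro i
    have h1 := (hkey i.castSucc).1
    have h2 := (hkey i.succ).1
    have h3 := hdegQ i θ
    have h4 := hrkQR i
    linear_combination h1 - h2 - h3 + muSlopeVec θ d * h4
  have hQω : ∀ i : Fin n,
      degTheta φ ω (quotObj F hF i) = muSlopeVec ω d * (rkPhi φ (quotObj F hF i) : ℝ) := by
    intro i
    have h1 := (hkey i.castSucc).2
    have h2 := (hkey i.succ).2
    have h3 := hdegQ i ω
    have h4 := hrkQR i
    linear_combination h1 - h2 - h3 + muSlopeVec ω d * h4
  have hμQθ : ∀ i : Fin n, muSlope φ θ (quotObj F hF i) = muSlopeVec θ d := fun i => by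
    rw [muSlope, hQθ i, mul_div_assoc, div_self (hrkQpos i).ne', mul_one]
  have hμQω : ∀ i : Fin n, muSlope φ ω (quotObj F hF i) = muSlopeVec ω d := fun i => by
    rw [muSlope, hQω i, mul_div_assoc, div_self (hrkQpos i).ne', mul_one]
  refine ⟨hn, h0, hlast, hne, fun i => ?_, fun i => ?_⟩
  · -- stability of the quotients
    refine ⟨(hstab i).1, fun P hb' ht' => ?_⟩
    have hp : ¬ IsZero ((P : 𝒜)) := neBotNonzero hb'
    have hrkP : (0 : ℝ) < (rkPhi φ ((P : 𝒜)) : ℝ) := by exact_mod_cast rkPos hpos hp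
    have h1 := (hstab i).2 P hb' ht'
    rw [hμQθ i, muSlope, div_lt_iff₀ hrkP] at h1
    obtain ⟨W, hW⟩ := existsW hadd (hF i) P
    have hdegW : ∀ ζ : I → ℝ, degTheta φ ζ ((W : 𝒜))
        = degTheta φ ζ ((F i.succ : 𝒜)) + degTheta φ ζ ((P : 𝒜)) := fun ζ => degAdd ζ hW
    have hrkW : (rkPhi φ ((W : 𝒜)) : ℝ)
        = (rkPhi φ ((F i.succ : 𝒜)) : ℝ) + (rkPhi φ ((P : 𝒜)) : ℝ) := by
      exact_mod_cast congrArg (fun z : ℤ => (z : ℝ)) (rkAdd hW)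
    have hrkFs : (0 : ℝ) ≤ (rkPhi φ ((F i.succ : 𝒜)) : ℝ) := by
      have : (0 : ℤ) ≤ rkPhi φ ((F i.succ : 𝒜)) :=
        Finset.sum_nonneg fun k _ => hpos.1 k _
      exact_mod_cast this
    have hWnz : ¬ IsZero ((W : 𝒜)) := by
      refine notZeroOfRkPos hadd ?_
      have : (0 : ℝ) < (rkPhi φ ((W : 𝒜)) : ℝ) := by rw [hrkW]; linarith
      exact_mod_cast this
    have hdegWθ : degTheta φ θ ((W : 𝒜)) < muSlopeVec θ d * (rkPhi φ ((W : 𝒜)) : ℝ) := by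
      have hFs := (hkey i.succ).1
      rw [hdegW θ, hrkW, mul_add]
      linarith [hFs, h1]
    have htr := (transport hadd hpos hd hfacet hM W hWnz).2.2 hdegWθ
    have hFsω := (hkey i.succ).2
    have hPω : degTheta φ ω ((P : 𝒜)) < muSlopeVec ω d * (rkPhi φ ((P : 𝒜)) : ℝ) := by
      rw [hdegW ω, hrkW, mul_add] at htr
      linarith [hFsω, htr]
    rw [hμQω i, muSlope, div_lt_iff₀ hrkP]
    exact hPω
  · -- slopes
    have hbot : F i.castSucc ≠ ⊥ := by
      intro hb
      have h1 : F i.succ = ⊥ := le_bot_iff.mp (hb ▸ hF i)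
      exact hne i (h1.trans hb.symm)
    have hx : ¬ IsZero ((F i.castSucc : 𝒜)) := neBotNonzero hbot
    have hrpos : (0 : ℝ) < (rkPhi φ ((F i.castSucc : 𝒜)) : ℝ) := by
      exact_mod_cast rkPos hpos hx
    rw [muSlopeDim hM ω, muSlope, div_eq_iff hrpos.ne']
    exact (hkey i.castSucc).2

end AuxLemmas

/-- if `θ` and `ω` lie in the same facet of `ℋ(d)`, `M` and `N` are
`θ`-semistable with `φ(M) = φ(N) = d`, and `M` is `S_θ`-equivalent to `N`, then `M` and
`N` are `ω`-semistable and `M` is `S_ω`-equivalent to `N`. -/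
theorem sEquiv_of_sameFacet [Nonempty I]
    (φ : I → 𝒜 → ℤ) (hadd : IsAdditiveFamily φ) (hpos : IsPositiveFamily φ)
    (d : I → ℕ) (hd : d ≠ 0) (θ ω : I → ℝ) (hfacet : SameFacet φ d θ ω)
    (M N : 𝒜) (hM : HasDimVec φ M d) (hN : HasDimVec φ N d)
    (hMss : Semistable φ θ M) (hNss : Semistable φ θ N)
    (hSe : SEquiv φ θ M N) :
    Semistable φ ω M ∧ Semistable φ ω N ∧ SEquiv φ ω M N := by
  obtain ⟨n, F, hF, G, hG, π, hJF, hJG, hiso⟩ := hSe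
  exact ⟨semistableTransport hadd hpos hd hfacet hM hMss,
    semistableTransport hadd hpos hd hfacet hN hNss,
    n, F, hF, G, hG, π, jhTransport hadd hpos hd hfacet hM hJF,
    jhTransport hadd hpos hd hfacet hN hJG, hiso⟩
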